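/- For any c ∈ (0,1) and T ∈ ℕ with T ≥ 1, it holds that 1 + ln((1 - c^{T+1})/(1 - c²)) ≤ Σ_{t=0}^{T-1} c^t / (Σ_{j=0}^{t} c^j) ≤ 1 + ln((1 - c^T)/(1 - c)). -/

import Mathlib

open Finset

lemma log_sub_bounds {a b : ℝ} (ha : 0 < a) (hab : a ≤ b) :
    (b - a) / b ≤ Real.log b - Real.log a ∧ Real.log b - Real.log a ≤ (b - a) / a := by
  have hb : 0 < b := lt_of_lt_of_le ha hab
  constructor
  · have h := Real.log_le_sub_one_of_pos (div_pos ha hb)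
    rw [Real.log_div ha.ne' hb.ne'] at h
    have h2 : a / b - 1 = -((b - a) / b) := by rw [sub_div, div_self hb.ne']; ring
    linarith [h, h2]
  · have h := Real.log_le_sub_one_of_pos (div_pos hb ha)
    rw [Real.log_div hb.ne' ha.ne'] at h
    have h2 : b / a - 1 = (b - a) / a := by rw [sub_div, div_self ha.ne']
    linarith [h, h2]

/-- For `c ∈ (0,1)` and `T ≥ 1`:
`1 + ln((1 - c^{T+1})/(1 - c²)) ≤ ∑_{t=0}^{T-1} c^t / (∑_{j=0}^t c^j) ≤ 1 + ln((1 - c^T)/(1 - c))`. -/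
theorem geometric_sum_integral_estimate
    (c : ℝ) (hc0 : 0 < c) (hc1 : c < 1) (T : ℕ) (hT : 1 ≤ T) :
    1 + Real.log ((1 - c ^ (T + 1)) / (1 - c ^ 2))
        ≤ ∑ t ∈ Finset.range T, c ^ t / (∑ j ∈ Finset.range (t + 1), c ^ j)
    ∧ ∑ t ∈ Finset.range T, c ^ t / (∑ j ∈ Finset.range (t + 1), c ^ j)
        ≤ 1 + Real.log ((1 - c ^ T) / (1 - c)) := by
  set S : ℕ → ℝ := fun t => ∑ j ∈ Finset.range (t + 1), c ^ j with hS
  have hSpos : ∀ t, 0 < S t := fun t =>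
    Finset.sum_pos (fun i _ => pow_pos hc0 i) (nonempty_range_add_one)
  have hstep : ∀ t, S (t + 1) = S t + c ^ (t + 1) := fun t => Finset.sum_range_succ _ _
  have hmono : ∀ t, S t ≤ S (t + 1) := fun t => by
    rw [hstep]; nlinarith [pow_pos hc0 (t + 1)]
  have hgeo : ∀ t, S t = (1 - c ^ (t + 1)) / (1 - c) := fun t => by
    show ∑ j ∈ Finset.range (t + 1), c ^ j = _
    rw [geom_sum_eq (ne_of_lt hc1)]
    rw [div_eq_div_iff (by linarith) (by linarith)]
    ring
  obtain ⟨n, rfl⟩ : ∃ n, T = n + 1 := ⟨T - 1, (Nat.succ_pred_eq_of_pos hT).symm⟩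
  have hsum : ∑ t ∈ Finset.range (n + 1), c ^ t / S t
      = 1 + ∑ i ∈ Finset.range n, c ^ (i + 1) / S (i + 1) := by
    rw [Finset.sum_range_succ']
    simp [hS, add_comm]
  have hS0 : S 0 = 1 := by simp [hS]
  have hS1 : S 1 = 1 + c := by simp [hS, Finset.sum_range_succ]
  constructor
  · -- lower bound
    have hterm : ∀ i ∈ Finset.range n,
        Real.log (S (i + 2)) - Real.log (S (i + 1)) ≤ c ^ (i + 1) / S (i + 1) := by
      intro i _
      have h := (log_sub_bounds (hSpos (i + 1)) (hmono (i + 1))).2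
      have hsub : S (i + 2) - S (i + 1) = c ^ (i + 2) := by rw [hstep]; ring
      rw [hsub] at h
      have hp := hSpos (i + 1)
      have hle : c ^ (i + 2) ≤ c ^ (i + 1) :=
        pow_le_pow_of_le_one hc0.le hc1.le (by omega)
      exact h.trans (by gcongr)
    have htel : ∑ i ∈ Finset.range n, (Real.log (S (i + 2)) - Real.log (S (i + 1)))
        = Real.log (S (n + 1)) - Real.log (S 1) := by
      exact Finset.sum_range_sub (fun i => Real.log (S (i + 1))) n
    have hlog : Real.log ((1 - c ^ (n + 1 + 1)) / (1 - c ^ 2))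
        = Real.log (S (n + 1)) - Real.log (S 1) := by
      have heq : (1 - c ^ (n + 1 + 1)) / (1 - c ^ 2) = S (n + 1) / S 1 := by
        rw [hgeo (n + 1), hS1]
        have h2 : (1 : ℝ) - c ^ 2 = (1 - c) * (1 + c) := by ring
        rw [h2]
        field_simp
      rw [heq, Real.log_div (hSpos _).ne' (hSpos _).ne']
    rw [hsum, hlog, ← htel]
    have := Finset.sum_le_sum hterm
    linarith
  · -- upper bound
    have hterm : ∀ i ∈ Finset.range n,
        c ^ (i + 1) / S (i + 1) ≤ Real.log (S (i + 1)) - Real.log (S i) := by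
      intro i _
      have h := (log_sub_bounds (hSpos i) (hmono i)).1
      have hsub : S (i + 1) - S i = c ^ (i + 1) := by rw [hstep]; ring
      rwa [hsub] at h
    have htel : ∑ i ∈ Finset.range n, (Real.log (S (i + 1)) - Real.log (S i))
        = Real.log (S n) - Real.log (S 0) :=
      Finset.sum_range_sub (fun i => Real.log (S i)) n
    have hlog : Real.log ((1 - c ^ (n + 1)) / (1 - c)) = Real.log (S n) := by
      rw [hgeo n]
    rw [hsum, hlog]
    have := Finset.sum_le_sum hterm
    rw [htel, hS0, Real.log_one] at this
    linarith
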